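/- arXiv:0806.0279 — 2 statements merged into one kernel-verified Lean document; each statement's English description precedes it below -/
import Mathlib

section
/- For integers k ≥ 0 and n ≥ k+1, op_{n+1,k+1}^{k+2} = op_{n,k}^{k+1} + op_{n,k+1}^{k+1} + op_{n,k+1}^{k+2}. -/
/-- The first unoccupied parking space `j` with `p ≤ j ≤ n`, if any. -/
def firstFree (n : ℕ) (occ : Finset ℕ) (p : ℕ) : Option ℕ :=
  (List.range' p (n + 1 - p)).find? (fun j => decide (j ∉ occ))

/-- Number of cars that fail to park, processing the preference list in order,
given the set of already occupied spaces. -/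
def flawsFrom (n : ℕ) : List ℕ → Finset ℕ → ℕ
  | [], _ => 0
  | p :: rest, occ =>
    match firstFree n occ p with
    | none => flawsFrom n rest occ + 1
    | some j => flawsFrom n rest (insert j occ)

/-- The number of flaws (unparked cars) of a preference list of length `n`. -/
def flaws (n : ℕ) (a : List ℕ) : ℕ := flawsFrom n a ∅

/-- A preference set of length `n`: a list of length `n` with entries in `{1, …, n}`. -/
def IsPrefSet (n : ℕ) (a : List ℕ) : Prop :=
  a.length = n ∧ ∀ x ∈ a, 1 ≤ x ∧ x ≤ n

/-- An ordered preference set of length `n`: a nondecreasing preference set. -/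
def IsOrderedPrefSet (n : ℕ) (a : List ℕ) : Prop :=
  IsPrefSet n a ∧ a.Pairwise (· ≤ ·)

/-- `op_{n,≥k}`: number of ordered preference sets of length `n` with at least `k` flaws. -/
noncomputable def opGe (n k : ℕ) : ℕ :=
  {a : List ℕ | IsOrderedPrefSet n a ∧ k ≤ flaws n a}.ncard

/-- `op_{n,≤k}`: number of ordered preference sets of length `n` with at most `k` flaws. -/
noncomputable def opLe (n k : ℕ) : ℕ :=
  {a : List ℕ | IsOrderedPrefSet n a ∧ flaws n a ≤ k}.ncard

/-- `op_{n,k}`: number of ordered preference sets of length `n` with exactly `k` flaws. -/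
noncomputable def opEq (n k : ℕ) : ℕ :=
  {a : List ℕ | IsOrderedPrefSet n a ∧ flaws n a = k}.ncard

/-- `op_{n,≥k,≤l}`: at least `k` flaws, every entry at most `l`. -/
noncomputable def opGeLe (n k l : ℕ) : ℕ :=
  {a : List ℕ | IsOrderedPrefSet n a ∧ k ≤ flaws n a ∧ ∀ x ∈ a, x ≤ l}.ncard

/-- `op_{n,≥k,≤l}^m`: at least `k` flaws, every entry at most `l`, leading term `m`. -/
noncomputable def opGeLeLead (n k l m : ℕ) : ℕ :=
  {a : List ℕ | IsOrderedPrefSet n a ∧ k ≤ flaws n a ∧ (∀ x ∈ a, x ≤ l) ∧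
    a.head? = some m}.ncard

/-- `op_{n,k,≤l}^m`: exactly `k` flaws, every entry at most `l`, leading term `m`. -/
noncomputable def opEqLeLead (n k l m : ℕ) : ℕ :=
  {a : List ℕ | IsOrderedPrefSet n a ∧ flaws n a = k ∧ (∀ x ∈ a, x ≤ l) ∧
    a.head? = some m}.ncard

/-- `op_{n,k}^m`: exactly `k` flaws, leading term `m`. -/
noncomputable def opLead (n k m : ℕ) : ℕ :=
  {a : List ℕ | IsOrderedPrefSet n a ∧ flaws n a = k ∧ a.head? = some m}.ncard

/-- `op_{n,k,=l}^m`: exactly `k` flaws, maximal entry exactly `l`, leading term `m`. -/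
noncomputable def opMaxLead (n k l m : ℕ) : ℕ :=
  {a : List ℕ | IsOrderedPrefSet n a ∧ flaws n a = k ∧ (∀ x ∈ a, x ≤ l) ∧ l ∈ a ∧
    a.head? = some m}.ncard

/-- Binomial coefficient `C(a, b)` with an integer lower index, which is `0`
when `b < 0` (the standard convention). -/
def chooseInt (a : ℕ) (b : ℤ) : ℕ := if 0 ≤ b then a.choose b.toNat else 0

/-- Abstract parking count for sorted lists: `s` is the last occupied slot of the
"interval-like" state. -/
def flawsAux (N : ℕ) : List ℕ → ℕ → ℕ
  | [], _ => 0
  | x :: l, s => if max x (s+1) ≤ N then flawsAux N l (max x (s+1)) else l.length + 1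

lemma flawsAux_le_length (N : ℕ) : ∀ (l : List ℕ) (s : ℕ), flawsAux N l s ≤ l.length
  | [], _ => Nat.zero_le _
  | x :: l, s => by
    simp only [flawsAux]
    split
    · exact le_trans (flawsAux_le_length N l _) (by simp)
    · simp

lemma length_le_flawsAux (N : ℕ) : ∀ (l : List ℕ) (s : ℕ),
    l.length ≤ flawsAux N l s + (N - s)
  | [], _ => by simp
  | x :: l, s => by
    simp only [flawsAux]
    split
    · rename_i h
      have ih := length_le_flawsAux N l (max x (s+1))
      have h1 : N - max x (s+1) + 1 ≤ N - s := by
        have hs : s + 1 ≤ max x (s+1) := le_max_right _ _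
        omega
      simp only [List.length_cons]
      omega
    · simp only [List.length_cons]; omega

lemma flawsAux_of_le (N : ℕ) (l : List ℕ) {s : ℕ} (h : N ≤ s) :
    flawsAux N l s = l.length := by
  cases l with
  | nil => rfl
  | cons x t =>
    simp only [flawsAux]
    rw [if_neg (by omega : ¬ max x (s+1) ≤ N)]
    simp

lemma flawsAux_head (N x : ℕ) (l : List ℕ) {s : ℕ} (h : s + 1 ≤ x) :
    flawsAux N (x :: l) s = if x ≤ N then flawsAux N l x else l.length + 1 := by
  simp only [flawsAux, Nat.max_eq_left h]

/-- Trichotomy for shifting the start slot up by one. -/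
lemma flawsAux_succ (N : ℕ) : ∀ (l : List ℕ) (s : ℕ), (∀ x ∈ l, x ≤ N) →
    flawsAux N l (s+1) = flawsAux N l s ∨
      (flawsAux N l (s+1) = flawsAux N l s + 1 ∧ flawsAux N l s + (N - s) = l.length)
  | [], s, _ => Or.inl rfl
  | x :: l, s, hle => by
    have hxN : x ≤ N := hle x (List.mem_cons_self)
    by_cases hsN : N ≤ s
    · left
      rw [flawsAux_of_le N _ hsN, flawsAux_of_le N _ (by omega : N ≤ s+1)]
    · -- s < N
      by_cases hx : s + 2 ≤ x
      · left
        rw [flawsAux_head N x l (by omega), flawsAux_head N x l (by omega : s + 1 ≤ x)]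
      · -- x ≤ s+1, so max x (s+1) = s+1, max x (s+2) = s+2
        have hm : max x (s+1) = s+1 := Nat.max_eq_right (by omega)
        have hm' : max x (s+2) = s+2 := Nat.max_eq_right (by omega)
        by_cases hs2 : s + 2 ≤ N
        · have e1 : flawsAux N (x :: l) (s+1) = flawsAux N l (s+2) := by
            simp only [flawsAux, hm', if_pos hs2]
          have e0 : flawsAux N (x :: l) s = flawsAux N l (s+1) := by
            simp only [flawsAux, hm, if_pos (by omega : s + 1 ≤ N)]
          rw [e1, e0]
          rcases flawsAux_succ N l (s+1) (fun y hy => hle y (List.mem_cons_of_mem _ hy)) with h | ⟨h1, h2⟩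
          · exact Or.inl h
          · right
            refine ⟨h1, ?_⟩
            simp only [List.length_cons]
            omega
        · -- s + 1 = N
          have hsN' : s + 1 = N := by omega
          have e1 : flawsAux N (x :: l) (s+1) = l.length + 1 := by
            simp only [flawsAux, hm']
            rw [if_neg (by omega)]
          have e0 : flawsAux N (x :: l) s = flawsAux N l N := by
            simp only [flawsAux, hm, if_pos (by omega : s + 1 ≤ N)]
            rw [hsN']
          rw [e1, e0, flawsAux_of_le N l le_rfl]
          right
          constructor
          · rfl
          · simp only [List.length_cons]; omega

/-- Shift everything up by one. -/
lemma flawsAux_map_succ (N : ℕ) : ∀ (l : List ℕ) (s : ℕ),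
    flawsAux (N+1) (l.map (· + 1)) (s+1) = flawsAux N l s
  | [], _ => rfl
  | x :: l, s => by
    simp only [List.map_cons, flawsAux]
    have hmax : max (x+1) (s+1+1) = max x (s+1) + 1 := by omega
    rw [hmax]
    by_cases h : max x (s+1) ≤ N
    · rw [if_pos (by omega), if_pos h, flawsAux_map_succ N l (max x (s+1))]
    · rw [if_neg (by omega), if_neg h]
      simp
-- appended after dev.lean content
lemma find?_range'_eq_some (occ : Finset ℕ) :
    ∀ (len p m : ℕ), p ≤ m → (∀ j, p ≤ j → j < m → j ∈ occ) → m ∉ occ → m < p + len →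
    (List.range' p len).find? (fun j => decide (j ∉ occ)) = some m
  | 0, p, m, h1, _, _, h4 => by omega
  | len+1, p, m, h1, h2, h3, h4 => by
    rw [List.range'_succ]
    by_cases hpm : p = m
    · subst hpm
      rw [List.find?_cons_of_pos (by simpa using h3)]
    · rw [List.find?_cons_of_neg (by simp [h2 p le_rfl (by omega)])]
      exact find?_range'_eq_some occ len (p+1) m (by omega)
        (fun j hj hj' => h2 j (by omega) hj') h3 (by omega)

lemma firstFree_eq (N : ℕ) (occ : Finset ℕ) (p s : ℕ)
    (h1 : ∀ j, p ≤ j → j ≤ s → j ∈ occ)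
    (h2 : ∀ j, s + 1 ≤ j → j ∉ occ) :
    firstFree N occ p =
      if max p (s+1) ≤ N then some (max p (s+1)) else none := by
  unfold firstFree
  split
  · rename_i h
    apply find?_range'_eq_some occ _ p (max p (s+1)) (le_max_left _ _)
      (fun j hj hj' => h1 j hj (by omega)) (h2 _ (le_max_right _ _))
    omega
  · rename_i h
    rw [List.find?_eq_none]
    intro x hx
    rw [List.mem_range'_1] at hx
    simp only [decide_eq_true_eq, not_not]
    have hxN : x ≤ N := by omega
    exact h1 x hx.1 (by omega)

/-- If every slot in `[x, N]` is occupied, every car with preference `≥ x` fails. -/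
lemma flawsFrom_all_fail (N : ℕ) (occ : Finset ℕ) :
    ∀ (l : List ℕ) (x : ℕ), (∀ y ∈ l, x ≤ y) → (∀ j, x ≤ j → j ≤ N → j ∈ occ) →
    flawsFrom N l occ = l.length
  | [], _, _, _ => rfl
  | y :: l, x, hlb, hcov => by
    have hnone : firstFree N occ y = none := by
      unfold firstFree
      rw [List.find?_eq_none]
      intro j hj
      rw [List.mem_range'_1] at hj
      simp only [decide_eq_true_eq, not_not]
      exact hcov j (le_trans (hlb y (List.mem_cons_self)) hj.1) (by omega)
    simp only [flawsFrom, hnone, List.length_cons]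
    rw [flawsFrom_all_fail N occ l x (fun z hz => hlb z (List.mem_cons_of_mem _ hz)) hcov]

/-- Main bridge: for sorted lists the parking process is captured by `flawsAux`. -/
lemma flawsFrom_eq_flawsAux (N : ℕ) :
    ∀ (l : List ℕ) (x₀ s : ℕ) (occ : Finset ℕ), l.Pairwise (· ≤ ·) →
    (∀ y ∈ l, x₀ ≤ y) →
    (∀ j, s + 1 ≤ j → j ∉ occ) →
    (∀ j, x₀ ≤ j → j ≤ s → j ∈ occ) →
    flawsFrom N l occ = flawsAux N l s
  | [], _, _, _, _, _, _, _ => rfl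
  | x :: l, x₀, s, occ, hsort, hlb, hocc1, hocc2 => by
    have hx0 : x₀ ≤ x := hlb x (List.mem_cons_self)
    have hsl : l.Pairwise (· ≤ ·) := (List.pairwise_cons.mp hsort).2
    have hlbl : ∀ y ∈ l, x ≤ y := (List.pairwise_cons.mp hsort).1
    have hff := firstFree_eq N occ x s (fun j hj hj' => hocc2 j (le_trans hx0 hj) hj') hocc1
    by_cases h : max x (s+1) ≤ N
    · rw [if_pos h] at hff
      simp only [flawsFrom, hff, flawsAux, if_pos h]
      apply flawsFrom_eq_flawsAux N l x (max x (s+1)) _ hsl hlbl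
      · intro j hj
        simp only [Finset.mem_insert, not_or]
        exact ⟨by omega, hocc1 j (by omega)⟩
      · intro j hj hj'
        rcases eq_or_lt_of_le hj' with h' | h'
        · simp [h']
        · have : j ≤ s := by omega
          exact Finset.mem_insert_of_mem (hocc2 j (le_trans hx0 hj) this)
    · rw [if_neg h] at hff
      simp only [flawsFrom, hff, flawsAux, if_neg h]
      congr 1
      apply flawsFrom_all_fail N occ l x hlbl
      intro j hj hjN
      exact hocc2 j (le_trans hx0 hj) (by omega)

lemma flaws_eq_flawsAux (N : ℕ) (l : List ℕ) (hsort : l.Pairwise (· ≤ ·))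
    (hlb : ∀ y ∈ l, 1 ≤ y) :
    flaws N l = flawsAux N l 0 := by
  apply flawsFrom_eq_flawsAux N l 1 0 ∅ hsort hlb
  · intro j _; exact Finset.notMem_empty j
  · intro j hj hj'; omega
lemma finite_lists (N : ℕ) : ∀ (n : ℕ), {l : List ℕ | l.length = n ∧ ∀ x ∈ l, x ≤ N}.Finite
  | 0 => Set.Finite.subset (Set.finite_singleton []) (by
      intro l hl
      simp only [Set.mem_setOf_eq] at hl
      simp [List.length_eq_zero_iff.mp hl.1])
  | n+1 => by
    apply Set.Finite.subset (Set.Finite.image (fun p : ℕ × List ℕ => p.1 :: p.2)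
      (Set.Finite.prod (Set.finite_Iic N) (finite_lists N n)))
    rintro l ⟨hlen, hle⟩
    cases l with
    | nil => simp at hlen
    | cons x t =>
      exact ⟨(x, t), ⟨hle x (List.mem_cons_self),
        by simpa using hlen, fun y hy => hle y (List.mem_cons_of_mem _ hy)⟩, rfl⟩

lemma opLead_finite (n K m : ℕ) :
    {a : List ℕ | IsOrderedPrefSet n a ∧ flaws n a = K ∧ a.head? = some m}.Finite := by
  apply Set.Finite.subset (finite_lists n n)
  rintro a ⟨⟨⟨hlen, hmem⟩, _⟩, _, _⟩
  exact ⟨hlen, fun x hx => (hmem x hx).2⟩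
lemma map_sub_one_add_one (t : List ℕ) (h : ∀ y ∈ t, 1 ≤ y) :
    (t.map (· - 1)).map (· + 1) = t := by
  induction t with
  | nil => rfl
  | cons x s ih =>
    simp only [List.map_cons, List.cons.injEq]
    refine ⟨?_, ih fun y hy => h y (List.mem_cons_of_mem _ hy)⟩
    have := h x (List.mem_cons_self); omega

lemma sorted_head_le {b : List ℕ} {h : ℕ} (hs : b.Pairwise (· ≤ ·))
    (hh : b.head? = some h) : ∀ y ∈ b, h ≤ y := by
  cases b with
  | nil => simp at hh
  | cons x t =>
    have hx : x = h := by simpa using hh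
    subst hx
    intro y hy
    rcases List.mem_cons.mp hy with rfl | hy
    · exact le_rfl
    · exact (List.pairwise_cons.mp hs).1 y hy

lemma flaws_psi (n k : ℕ) (hn : k + 1 ≤ n) (b : List ℕ) (hsort : b.Pairwise (· ≤ ·))
    (hlb : ∀ y ∈ b, k + 1 ≤ y) :
    flaws (n+1) ((k+2) :: b.map (· + 1)) = flawsAux n b (k+1) := by
  rw [flaws_eq_flawsAux]
  · rw [flawsAux_head (n+1) (k+2) _ (by omega)]
    rw [if_pos (by omega)]
    exact flawsAux_map_succ n b (k+1)
  · rw [List.pairwise_cons]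
    constructor
    · intro y hy
      obtain ⟨z, hz, rfl⟩ := List.mem_map.mp hy
      have := hlb z hz; omega
    · exact List.Pairwise.map _ (fun a b h => by omega) hsort
  · intro y hy
    rcases List.mem_cons.mp hy with rfl | hy
    · omega
    · obtain ⟨z, hz, rfl⟩ := List.mem_map.mp hy
      omega

lemma key_iff (n k : ℕ) (hn : k + 1 ≤ n) (b : List ℕ) (hops : IsOrderedPrefSet n b) :
    (flawsAux n b (k+1) = k+1 ∧ ∀ y ∈ b, k + 1 ≤ y) ↔
      ((flaws n b = k ∧ b.head? = some (k+1)) ∨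
       (flaws n b = k+1 ∧ b.head? = some (k+1)) ∨
       (flaws n b = k+1 ∧ b.head? = some (k+2))) := by
  obtain ⟨⟨hlen, hmem⟩, hsort⟩ := hops
  obtain ⟨b1, t, rfl⟩ : ∃ b1 t, b = b1 :: t := by
    cases b with
    | nil => simp at hlen; omega
    | cons x t => exact ⟨x, t, rfl⟩
  have hlen' : t.length = n - 1 := by simp at hlen; omega
  have hfl0 : flaws n (b1 :: t) = flawsAux n (b1 :: t) 0 :=
    flaws_eq_flawsAux n _ hsort (fun y hy => (hmem y hy).1)
  have hb1n : b1 ≤ n := (hmem b1 (List.mem_cons_self)).2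
  have hub : ∀ x ∈ b1 :: t, x ≤ n := fun x hx => (hmem x hx).2
  constructor
  · rintro ⟨hf, hlb⟩
    have hb1 : k + 1 ≤ b1 := hlb b1 (List.mem_cons_self)
    have hb1' : b1 ≤ k + 2 := by
      by_contra hcon
      push_neg at hcon
      rw [flawsAux_head n b1 t (by omega), if_pos hb1n] at hf
      have hlow := length_le_flawsAux n t b1
      omega
    rcases (by omega : b1 = k + 1 ∨ b1 = k + 2) with rfl | rfl
    · have h0 : flawsAux n ((k+1) :: t) 0 = flawsAux n ((k+1) :: t) k := by
        rw [flawsAux_head n _ t (by omega), flawsAux_head n _ t (by omega)]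
      rcases flawsAux_succ n ((k+1) :: t) k hub with h | ⟨h1, h2⟩
      · right; left
        refine ⟨?_, rfl⟩
        rw [hfl0, h0, ← h, hf]
      · left
        refine ⟨?_, rfl⟩
        rw [hfl0, h0]
        omega
    · right; right
      refine ⟨?_, rfl⟩
      have h0 : flawsAux n ((k+2) :: t) 0 = flawsAux n ((k+2) :: t) (k+1) := by
        rw [flawsAux_head n _ t (by omega), flawsAux_head n _ t (by omega)]
      rw [hfl0, h0]
      exact hf
  · intro h
    have hhead : (b1 :: t).head? = some (k+1) ∨ (b1 :: t).head? = some (k+2) := by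
      rcases h with ⟨_, h⟩ | ⟨_, h⟩ | ⟨_, h⟩
      · exact Or.inl h
      · exact Or.inl h
      · exact Or.inr h
    have hlb : ∀ y ∈ b1 :: t, k + 1 ≤ y := by
      rcases hhead with h' | h'
      · exact fun y hy => sorted_head_le hsort h' y hy
      · intro y hy
        have := sorted_head_le hsort h' y hy; omega
    refine ⟨?_, hlb⟩
    rcases h with ⟨hfl, hh⟩ | ⟨hfl, hh⟩ | ⟨hfl, hh⟩
    · -- flaws = k, head k+1
      have hb1 : b1 = k + 1 := by simpa using hh
      subst hb1
      have h0 : flawsAux n ((k+1) :: t) 0 = flawsAux n ((k+1) :: t) k := by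
        rw [flawsAux_head n _ t (by omega), flawsAux_head n _ t (by omega)]
      have hk : flawsAux n ((k+1) :: t) k = k := by rw [← h0, ← hfl0]; exact hfl
      have hlow := length_le_flawsAux n ((k+1) :: t) (k+1)
      simp only [List.length_cons] at hlow
      rcases flawsAux_succ n ((k+1) :: t) k hub with h | ⟨h1, h2⟩
      · omega
      · omega
    · -- flaws = k+1, head k+1
      have hb1 : b1 = k + 1 := by simpa using hh
      subst hb1
      have h0 : flawsAux n ((k+1) :: t) 0 = flawsAux n ((k+1) :: t) k := by
        rw [flawsAux_head n _ t (by omega), flawsAux_head n _ t (by omega)]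
      have hk : flawsAux n ((k+1) :: t) k = k + 1 := by rw [← h0, ← hfl0]; exact hfl
      rcases flawsAux_succ n ((k+1) :: t) k hub with h | ⟨h1, h2⟩
      · rw [h, hk]
      · simp only [List.length_cons] at h2
        omega
    · -- flaws = k+1, head k+2
      have hb1 : b1 = k + 2 := by simpa using hh
      subst hb1
      have h0 : flawsAux n ((k+2) :: t) 0 = flawsAux n ((k+2) :: t) (k+1) := by
        rw [flawsAux_head n _ t (by omega), flawsAux_head n _ t (by omega)]
      rw [← h0, ← hfl0]
      exact hfl

lemma psi_ops (n k : ℕ) (hn : k + 1 ≤ n) (b : List ℕ) (hops : IsOrderedPrefSet n b)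
    (hlb : ∀ y ∈ b, k + 1 ≤ y) :
    IsOrderedPrefSet (n+1) ((k+2) :: b.map (· + 1)) := by
  obtain ⟨⟨hlen, hmem⟩, hsort⟩ := hops
  refine ⟨⟨by simp [hlen], ?_⟩, ?_⟩
  · intro x hx
    rcases List.mem_cons.mp hx with rfl | hx
    · omega
    · obtain ⟨z, hz, rfl⟩ := List.mem_map.mp hx
      have := hmem z hz; omega
  · rw [List.pairwise_cons]
    constructor
    · intro y hy
      obtain ⟨z, hz, rfl⟩ := List.mem_map.mp hy
      have := hlb z hz; omega
    · exact List.Pairwise.map _ (fun a b h => by omega) hsort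

theorem stmt14 (n k : ℕ) (hn : k + 1 ≤ n) :
    opLead (n + 1) (k + 1) (k + 2)
      = opLead n k (k + 1) + opLead n (k + 1) (k + 1) + opLead n (k + 1) (k + 2) := by
  classical
  unfold opLead
  have hinj : Function.Injective (fun b : List ℕ => (k+2) :: b.map (· + 1)) := by
    intro b1 b2 h
    simp only [List.cons.injEq, true_and] at h
    exact List.map_injective_iff.mpr (fun a b hab => by omega) h
  have himg :
      {a : List ℕ | IsOrderedPrefSet (n+1) a ∧ flaws (n+1) a = k+1 ∧ a.head? = some (k+2)}
        = (fun b : List ℕ => (k+2) :: b.map (· + 1)) ''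
          ({a : List ℕ | IsOrderedPrefSet n a ∧ flaws n a = k ∧ a.head? = some (k+1)} ∪
           {a : List ℕ | IsOrderedPrefSet n a ∧ flaws n a = k+1 ∧ a.head? = some (k+1)} ∪
           {a : List ℕ | IsOrderedPrefSet n a ∧ flaws n a = k+1 ∧ a.head? = some (k+2)}) := by
    ext a
    simp only [Set.mem_setOf_eq, Set.mem_image, Set.mem_union]
    constructor
    · rintro ⟨hops, hfl, hhead⟩
      obtain ⟨a1, t, rfl⟩ : ∃ a1 t, a = a1 :: t := by
        cases a with
        | nil => simp at hhead
        | cons x t => exact ⟨x, t, rfl⟩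
      have ha1 : a1 = k + 2 := by simpa using hhead
      subst ha1
      have htlb : ∀ y ∈ t, k + 2 ≤ y := (List.pairwise_cons.mp hops.2).1
      have htmem : ∀ y ∈ t, 1 ≤ y ∧ y ≤ n + 1 :=
        fun y hy => hops.1.2 y (List.mem_cons_of_mem _ hy)
      have hbmap : (t.map (· - 1)).map (· + 1) = t :=
        map_sub_one_add_one t (fun y hy => (htmem y hy).1)
      have hbops : IsOrderedPrefSet n (t.map (· - 1)) := by
        refine ⟨⟨?_, ?_⟩, ?_⟩
        · have := hops.1.1
          simp at this ⊢
          omega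
        · intro x hx
          obtain ⟨z, hz, rfl⟩ := List.mem_map.mp hx
          have h1 := htlb z hz
          have h2 := (htmem z hz).2
          omega
        · exact List.Pairwise.map _ (fun a b hab => by omega)
            (List.pairwise_cons.mp hops.2).2
      have hblb : ∀ y ∈ t.map (· - 1), k + 1 ≤ y := by
        intro y hy
        obtain ⟨z, hz, rfl⟩ := List.mem_map.mp hy
        have := htlb z hz; omega
      have hfb : flawsAux n (t.map (· - 1)) (k+1) = k+1 := by
        have h1 := flaws_psi n k hn (t.map (· - 1)) hbops.2 hblb
        rw [hbmap] at h1
        rw [← h1]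
        exact hfl
      refine ⟨t.map (· - 1), ?_, ?_⟩
      · have := (key_iff n k hn (t.map (· - 1)) hbops).mp ⟨hfb, hblb⟩
        rcases this with h | h | h
        · exact Or.inl (Or.inl ⟨hbops, h.1, h.2⟩)
        · exact Or.inl (Or.inr ⟨hbops, h.1, h.2⟩)
        · exact Or.inr ⟨hbops, h.1, h.2⟩
      · show (k+2) :: (t.map (· - 1)).map (· + 1) = (k+2) :: t
        rw [hbmap]
    · rintro ⟨b, hbmem, rfl⟩
      have hbops : IsOrderedPrefSet n b := by
        rcases hbmem with (⟨h, _⟩ | ⟨h, _⟩) | ⟨h, _⟩ <;> exact h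
      have hdisj : (flaws n b = k ∧ b.head? = some (k+1)) ∨
          (flaws n b = k+1 ∧ b.head? = some (k+1)) ∨
          (flaws n b = k+1 ∧ b.head? = some (k+2)) := by
        rcases hbmem with (⟨_, h1, h2⟩ | ⟨_, h1, h2⟩) | ⟨_, h1, h2⟩
        · exact Or.inl ⟨h1, h2⟩
        · exact Or.inr (Or.inl ⟨h1, h2⟩)
        · exact Or.inr (Or.inr ⟨h1, h2⟩)
      have hkey := (key_iff n k hn b hbops).mpr hdisj
      refine ⟨psi_ops n k hn b hbops hkey.2, ?_, rfl⟩
      rw [flaws_psi n k hn b hbops.2 hkey.2]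
      exact hkey.1
  rw [himg, Set.ncard_image_of_injective _ hinj]
  have hf1 := opLead_finite n k (k+1)
  have hf2 := opLead_finite n (k+1) (k+1)
  have hf3 := opLead_finite n (k+1) (k+2)
  have hd12 : Disjoint
      {a : List ℕ | IsOrderedPrefSet n a ∧ flaws n a = k ∧ a.head? = some (k+1)}
      {a : List ℕ | IsOrderedPrefSet n a ∧ flaws n a = k+1 ∧ a.head? = some (k+1)} := by
    rw [Set.disjoint_left]
    rintro a ⟨_, h1, _⟩ ⟨_, h2, _⟩
    omega
  have hd3 : Disjoint
      ({a : List ℕ | IsOrderedPrefSet n a ∧ flaws n a = k ∧ a.head? = some (k+1)} ∪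
       {a : List ℕ | IsOrderedPrefSet n a ∧ flaws n a = k+1 ∧ a.head? = some (k+1)})
      {a : List ℕ | IsOrderedPrefSet n a ∧ flaws n a = k+1 ∧ a.head? = some (k+2)} := by
    rw [Set.disjoint_left]
    rintro a (⟨_, _, h1⟩ | ⟨_, _, h1⟩) ⟨_, _, h2⟩ <;>
      · rw [h1] at h2
        simp at h2
  rw [Set.ncard_union_eq hd3 (hf1.union hf2) hf3,
    Set.ncard_union_eq hd12 hf1 hf2]
end

section
/- For integers 1 ≤ m ≤ k and n ≥ l ≥ k+1, op_{n,k,=l}^m = Σ_{j=m+1}^{k+1} Σ_{i=1}^{n−k} c_i · op_{n−i,k,=l−i}^j, where c_i is the i-th Catalan number. -/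
/-! ### Basic lemmas about `firstFree` and `flawsFrom` -/

lemma find?_range'_eq_some_s17 {pred : ℕ → Bool} :
    ∀ (len p q : ℕ), p ≤ q → q < p + len → pred q = true →
      (∀ r, p ≤ r → r < q → pred r = false) →
      (List.range' p len).find? pred = some q := by
  intro len
  induction len with
  | zero => intro p q h1 h2; omega
  | succ len ih =>
    intro p q h1 h2 hq hlt
    rw [List.range'_succ, List.find?_cons]
    rcases eq_or_lt_of_le h1 with rfl | hpq
    · simp [hq]
    · have : pred p = false := hlt p le_rfl hpq
      simp only [this]
      exact ih (p+1) q hpq (by omega) hq (fun r h1 h2 => hlt r (by omega) h2)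

lemma firstFree_eq_some {n : ℕ} {occ : Finset ℕ} {p q : ℕ}
    (h1 : p ≤ q) (h2 : q ≤ n) (hq : q ∉ occ)
    (hlt : ∀ r, p ≤ r → r < q → r ∈ occ) :
    firstFree n occ p = some q := by
  apply find?_range'_eq_some_s17 _ _ _ h1 (by omega) (by simp [hq])
  intro r hr1 hr2
  simp [hlt r hr1 hr2]

lemma firstFree_eq_none {n : ℕ} {occ : Finset ℕ} {p : ℕ}
    (h : ∀ r, p ≤ r → r ≤ n → r ∈ occ) :
    firstFree n occ p = none := by
  apply List.find?_eq_none.2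
  intro r hr
  rw [List.mem_range'_1] at hr
  simp [h r hr.1 (by omega)]

lemma firstFree_some_spec {n : ℕ} {occ : Finset ℕ} {p q : ℕ}
    (h : firstFree n occ p = some q) : p ≤ q ∧ q ≤ n ∧ q ∉ occ := by
  have hmem := List.mem_of_find?_eq_some h
  have hpred := List.find?_some h
  rw [List.mem_range'_1] at hmem
  simp only [decide_eq_true_eq] at hpred
  exact ⟨hmem.1, by omega, hpred⟩


/-- The occupied set after processing a list of preferences. -/
def finalOcc (n : ℕ) : List ℕ → Finset ℕ → Finset ℕ
  | [], occ => occ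
  | p :: rest, occ =>
    match firstFree n occ p with
    | none => finalOcc n rest occ
    | some j => finalOcc n rest (insert j occ)


lemma flawsFrom_cons_none {n p occ} (rest : List ℕ) (h : firstFree n occ p = none) :
    flawsFrom n (p :: rest) occ = flawsFrom n rest occ + 1 := by
  simp only [flawsFrom, h]

lemma flawsFrom_cons_some {n p occ j} (rest : List ℕ) (h : firstFree n occ p = some j) :
    flawsFrom n (p :: rest) occ = flawsFrom n rest (insert j occ) := by
  simp only [flawsFrom, h]

lemma finalOcc_cons_none {n p occ} (rest : List ℕ) (h : firstFree n occ p = none) :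
    finalOcc n (p :: rest) occ = finalOcc n rest occ := by
  simp only [finalOcc, h]

lemma finalOcc_cons_some {n p occ j} (rest : List ℕ) (h : firstFree n occ p = some j) :
    finalOcc n (p :: rest) occ = finalOcc n rest (insert j occ) := by
  simp only [finalOcc, h]

lemma flawsFrom_append (n : ℕ) (xs ys : List ℕ) (occ : Finset ℕ) :
    flawsFrom n (xs ++ ys) occ = flawsFrom n xs occ + flawsFrom n ys (finalOcc n xs occ) := by
  induction xs generalizing occ with
  | nil => simp [flawsFrom, finalOcc]
  | cons p rest ih =>
    rw [List.cons_append]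
    cases hff : firstFree n occ p with
    | none =>
      rw [flawsFrom_cons_none _ hff, flawsFrom_cons_none _ hff, finalOcc_cons_none _ hff, ih]
      omega
    | some j =>
      rw [flawsFrom_cons_some _ hff, flawsFrom_cons_some _ hff, finalOcc_cons_some _ hff, ih]

lemma flawsFrom_le_length (n : ℕ) (ys : List ℕ) (occ : Finset ℕ) :
    flawsFrom n ys occ ≤ ys.length := by
  induction ys generalizing occ with
  | nil => simp [flawsFrom]
  | cons p rest ih =>
    cases hff : firstFree n occ p with
    | none => rw [flawsFrom_cons_none _ hff]; simpa using ih occ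
    | some j => rw [flawsFrom_cons_some _ hff]; simpa using (ih (insert j occ)).trans (by omega)

lemma flawsFrom_all_fail_s17 (n : ℕ) (ys : List ℕ) (occ : Finset ℕ)
    (h : ∀ p ∈ ys, ∀ r, p ≤ r → r ≤ n → r ∈ occ) :
    flawsFrom n ys occ = ys.length := by
  induction ys with
  | nil => simp [flawsFrom]
  | cons p rest ih =>
    rw [flawsFrom_cons_none _ (firstFree_eq_none (h p (by simp)))]
    rw [ih (fun p hp => h p (by simp [hp]))]
    simp

lemma flawsFrom_parked_bound (n jj : ℕ) :
    ∀ (ys : List ℕ) (occ : Finset ℕ), (∀ p ∈ ys, jj ≤ p) →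
      ys.length ≤ flawsFrom n ys occ + ((Finset.Icc jj n) \ occ).card := by
  intro ys
  induction ys with
  | nil => simp
  | cons p rest ih =>
    intro occ hmem
    cases hff : firstFree n occ p with
    | none =>
      rw [flawsFrom_cons_none _ hff]
      have := ih occ (fun x hx => hmem x (by simp [hx]))
      simp only [List.length_cons]; omega
    | some q =>
      rw [flawsFrom_cons_some _ hff]
      obtain ⟨h1, h2, h3⟩ := firstFree_some_spec hff
      have hq : q ∈ Finset.Icc jj n \ occ := by
        simp only [Finset.mem_sdiff, Finset.mem_Icc]
        exact ⟨⟨(hmem p (by simp)).trans h1, h2⟩, h3⟩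
      have hcard : (Finset.Icc jj n \ insert q occ).card + 1 = ((Finset.Icc jj n) \ occ).card := by
        have : Finset.Icc jj n \ occ = insert q (Finset.Icc jj n \ insert q occ) := by
          ext x
          simp only [Finset.mem_sdiff, Finset.mem_insert, Finset.mem_Icc]
          constructor
          · rintro ⟨hx1, hx2⟩
            by_cases hxq : x = q
            · exact Or.inl hxq
            · exact Or.inr ⟨hx1, by simp [hxq, hx2]⟩
          · rintro (rfl | ⟨hx1, hx2⟩)
            · simpa using ⟨⟨(hmem p (by simp)).trans h1, h2⟩, h3⟩
            · exact ⟨hx1, fun h => hx2 (by simp [h])⟩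
        rw [this, Finset.card_insert_of_notMem (by simp)]
      have := ih (insert q occ) (fun x hx => hmem x (by simp [hx]))
      simp only [List.length_cons]
      omega
/-! ### The "fills" lemma and the shift lemma -/

lemma fills (n m : ℕ) (hm : 1 ≤ m) :
    ∀ (xs : List ℕ) (c : ℕ), m ≤ c → c + xs.length ≤ n + 1 →
      (∀ (t : ℕ) (h : t < xs.length), m ≤ xs[t] ∧ xs[t] ≤ c + t) →
      flawsFrom n xs (Finset.Icc m (c-1)) = 0 ∧
      finalOcc n xs (Finset.Icc m (c-1)) = Finset.Icc m (c - 1 + xs.length) := by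
  intro xs
  induction xs with
  | nil => intro c h1 h2 h3; simp [flawsFrom, finalOcc]
  | cons p rest ih =>
    intro c h1 h2 h3
    have hp0 := h3 0 (by simp)
    simp only [List.getElem_cons_zero] at hp0
    have hff : firstFree n (Finset.Icc m (c-1)) p = some c := by
      apply firstFree_eq_some (by omega) (by simp at h2; omega)
      · simp only [Finset.mem_Icc]; omega
      · intro r hr1 hr2
        simp only [Finset.mem_Icc]; omega
    have hins : insert c (Finset.Icc m (c-1)) = Finset.Icc m ((c+1)-1) := by
      ext x
      simp only [Finset.mem_insert, Finset.mem_Icc]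
      omega
    rw [flawsFrom_cons_some _ hff, finalOcc_cons_some _ hff, hins]
    have h3' : ∀ (t : ℕ) (h : t < rest.length), m ≤ rest[t] ∧ rest[t] ≤ (c+1) + t := by
      intro t ht
      have := h3 (t+1) (by simp; omega)
      simp only [List.getElem_cons_succ] at this
      exact ⟨this.1, by omega⟩
    obtain ⟨e1, e2⟩ := ih (c+1) (by omega) (by simp at h2 ⊢; omega) h3'
    refine ⟨e1, ?_⟩
    rw [e2]
    congr 1
    simp only [List.length_cons]
    omega

lemma find?_congr' {α : Type*} {p q : α → Bool} :
    ∀ l : List α, (∀ x ∈ l, p x = q x) → l.find? p = l.find? q := by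
  intro l
  induction l with
  | nil => simp
  | cons a as ih =>
    intro h
    rw [List.find?_cons, List.find?_cons, h a (by simp)]
    cases q a with
    | true => rfl
    | false => exact ih (fun x hx => h x (by simp [hx]))

lemma firstFree_shift {n m i : ℕ} (hm : 1 ≤ m) (occ₂ : Finset ℕ) (p : ℕ) (hp : m + i ≤ p) (hin : i ≤ n) :
    firstFree n (Finset.Icc m (m+i-1) ∪ occ₂.image (· + i)) p
      = (firstFree (n-i) occ₂ (p - i)).map (· + i) := by
  unfold firstFree
  have hrange : List.range' p (n+1-p) = (List.range' (p-i) ((n-i)+1-(p-i))).map (i + ·) := by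
    rw [List.map_add_range']
    congr 1 <;> omega
  rw [hrange, List.find?_map]
  have hpred : ∀ x ∈ List.range' (p-i) ((n-i)+1-(p-i)),
      ((fun j => decide (j ∉ Finset.Icc m (m+i-1) ∪ occ₂.image (· + i))) ∘ (i + ·)) x
        = (fun j => decide (j ∉ occ₂)) x := by
    intro x hx
    rw [List.mem_range'_1] at hx
    have hxm : m ≤ x := by omega
    simp only [Function.comp_apply, decide_eq_decide, Finset.mem_union, Finset.mem_Icc,
      Finset.mem_image]
    constructor
    · intro h hx2
      exact h (Or.inr ⟨x, hx2, by omega⟩)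
    · rintro h (h1 | ⟨y, hy, hyx⟩)
      · omega
      · have : y = x := by omega
        exact h (this ▸ hy)
  rw [find?_congr' _ hpred]
  cases (List.range' (p-i) ((n-i)+1-(p-i))).find? (fun j => decide (j ∉ occ₂)) with
  | none => rfl
  | some q => simp [Nat.add_comm]

lemma flawsFrom_shift {n m i : ℕ} (hm : 1 ≤ m) (hin : i ≤ n) :
    ∀ (ys : List ℕ) (occ₂ : Finset ℕ), (∀ p ∈ ys, m + i ≤ p) →
      flawsFrom n ys (Finset.Icc m (m+i-1) ∪ occ₂.image (· + i))
        = flawsFrom (n-i) (ys.map (· - i)) occ₂ := by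
  intro ys
  induction ys with
  | nil => intro occ₂ h; simp [flawsFrom]
  | cons p rest ih =>
    intro occ₂ h
    have hp : m + i ≤ p := h p (by simp)
    have hsh := firstFree_shift (m := m) hm occ₂ p hp hin
    rw [List.map_cons]
    cases hff : firstFree (n-i) occ₂ (p - i) with
    | none =>
      rw [hff] at hsh
      rw [flawsFrom_cons_none _ hsh, flawsFrom_cons_none _ hff,
        ih occ₂ (fun x hx => h x (by simp [hx]))]
    | some q =>
      rw [hff] at hsh
      simp only [Option.map_some] at hsh
      rw [flawsFrom_cons_some _ hsh, flawsFrom_cons_some _ hff]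
      have : insert (q + i) (Finset.Icc m (m+i-1) ∪ occ₂.image (· + i))
          = Finset.Icc m (m+i-1) ∪ (insert q occ₂).image (· + i) := by
        rw [Finset.image_insert, Finset.union_insert]
      rw [this, ih (insert q occ₂) (fun x hx => h x (by simp [hx]))]
/-! ### Counting helpers -/

lemma finite_pref (N B : ℕ) : {a : List ℕ | a.length = N ∧ ∀ x ∈ a, x ≤ B}.Finite := by
  have h := (List.finite_length_eq (Fin (B+1)) N).image (List.map (Fin.val))
  apply h.subset
  rintro a ⟨hlen, hb⟩
  refine ⟨a.pmap (fun x h => (⟨x, h⟩ : Fin (B+1))) (fun x hx => Nat.lt_succ_of_le (hb x hx)),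
    ?_, ?_⟩
  · simpa using hlen
  · rw [List.map_pmap]
    simp

lemma ncard_prod' {α β : Type*} (s : Set α) (t : Set β) :
    (s ×ˢ t).ncard = s.ncard * t.ncard := by
  rw [← Nat.card_coe_set_eq, ← Nat.card_coe_set_eq, ← Nat.card_coe_set_eq,
    Nat.card_congr (Equiv.Set.prod s t), Nat.card_prod]

lemma ncard_biUnion {α ι : Type*} [DecidableEq ι] (t : Finset ι) (f : ι → Set α)
    (hfin : ∀ i ∈ t, (f i).Finite)
    (hdisj : ∀ i ∈ t, ∀ j ∈ t, i ≠ j → Disjoint (f i) (f j)) :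
    (⋃ i ∈ t, f i).ncard = ∑ i ∈ t, (f i).ncard := by
  induction t using Finset.induction with
  | empty => simp
  | @insert a s ha ih =>
    rw [Finset.sum_insert ha]
    have heq : (⋃ i ∈ insert a s, f i) = f a ∪ ⋃ i ∈ (s : Finset ι), f i := by
      simp [Set.biUnion_insert]
    have hfin' : (⋃ i ∈ (s : Finset ι), f i).Finite :=
      Set.Finite.biUnion s.finite_toSet (fun i hi => hfin i (by simp only [Finset.mem_insert]; exact Or.inr (by simpa using hi)))
    have hdisj' : Disjoint (f a) (⋃ i ∈ (s : Finset ι), f i) := by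
      rw [Set.disjoint_iUnion_right]
      intro i
      rw [Set.disjoint_iUnion_right]
      intro hi
      have hi' : i ∈ s := by simpa using hi
      exact hdisj a (by simp) i (by simp [hi']) (fun h => ha (h ▸ hi'))
    rw [heq, Set.ncard_union_eq hdisj' (hfin a (by simp)) hfin',
      ih (fun i hi => hfin i (by simp [hi]))
        (fun i hi j hj hij => hdisj i (by simp [hi]) j (by simp [hj]) hij)]
/-! ### Ordered parking functions are counted by Catalan numbers -/

lemma sorted_getElem_le {b : List ℕ} (hs : b.Pairwise (· ≤ ·)) {t t' : ℕ}
    (h : t ≤ t') (h' : t' < b.length) : b[t]'(lt_of_le_of_lt h h') ≤ b[t'] := by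
  rcases eq_or_lt_of_le h with rfl | hlt
  · exact le_rfl
  · exact List.pairwise_iff_getElem.1 hs t t' _ _ hlt

def OPF (i : ℕ) : Set (List ℕ) :=
  {b | b.length = i ∧ b.Pairwise (· ≤ ·) ∧ ∀ (t : ℕ) (ht : t < b.length), 1 ≤ b[t] ∧ b[t] ≤ t + 1}

lemma OPF_finite (i : ℕ) : (OPF i).Finite := by
  apply (finite_pref i i).subset
  rintro b ⟨h1, h2, h3⟩
  refine ⟨h1, fun x hx => ?_⟩
  obtain ⟨t, ht, rfl⟩ := List.mem_iff_getElem.1 hx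
  have := (h3 t ht).2
  omega

/-- The gluing map for the Catalan recursion. -/
def glue (s : ℕ) (bc : List ℕ × List ℕ) : List ℕ :=
  bc.1 ++ (s+1) :: bc.2.map (· + s)

lemma glue_mem {q s : ℕ} (hs : s ≤ q) {xs ys : List ℕ}
    (hxs : xs ∈ OPF s) (hys : ys ∈ OPF (q - s)) :
    glue s (xs, ys) ∈ OPF (q+1) ∧
    (∀ (ht : s < (glue s (xs, ys)).length), (glue s (xs, ys))[s] = s+1) ∧
    (∀ (t : ℕ) (ht : t < (glue s (xs, ys)).length), s < t → (glue s (xs, ys))[t] ≤ t) := by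
  obtain ⟨hxl, hxsort, hxb⟩ := hxs
  obtain ⟨hyl, hysort, hyb⟩ := hys
  set b := glue s (xs, ys) with hb
  have hlen : b.length = q + 1 := by
    simp only [hb, glue, List.length_append, List.length_cons, List.length_map, hxl, hyl]
    omega
  have hxmem : ∀ x ∈ xs, x ≤ s := by
    intro x hx
    obtain ⟨t, ht, rfl⟩ := List.mem_iff_getElem.1 hx
    have := (hxb t ht).2
    omega
  have hymem : ∀ x ∈ ys, 1 ≤ x := by
    intro x hx
    obtain ⟨t, ht, rfl⟩ := List.mem_iff_getElem.1 hx
    exact (hyb t ht).1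
  have hget : ∀ (t : ℕ) (ht : t < b.length),
      (∀ hts : t < s, b[t] = xs[t]'(by rw [hxl]; exact hts)) ∧ (t = s → b[t] = s + 1) ∧
      (∀ hst : s < t, b[t] = ys[t-s-1]'(by rw [hyl]; rw [hlen] at ht; omega) + s) := by
    intro t ht
    refine ⟨?_, ?_, ?_⟩
    · intro hts
      simp only [hb, glue]
      rw [List.getElem_append_left (by omega)]
    · rintro rfl
      simp only [hb, glue]
      rw [List.getElem_append_right (by omega)]
      simp [hxl]
    · intro hst
      simp only [hb, glue]
      rw [List.getElem_append_right (by rw [hxl]; omega)]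
      have hts : t - xs.length = (t - s - 1) + 1 := by rw [hxl]; omega
      simp only [hts, List.getElem_cons_succ, List.getElem_map]
  have hsort : b.Pairwise (· ≤ ·) := by
    simp only [hb, glue]
    refine List.pairwise_append.mpr ⟨hxsort, ?_, ?_⟩
    · refine List.pairwise_cons.mpr ?_
      constructor
      · intro y hy
        obtain ⟨x, hx, rfl⟩ := List.mem_map.1 hy
        have := hymem x hx
        omega
      · rw [List.pairwise_map]
        exact hysort.imp (fun h => by omega)
    · intro a ha y hy
      have ha' := hxmem a ha
      rcases List.mem_cons.1 hy with rfl | hy'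
      · omega
      · obtain ⟨x, hx, rfl⟩ := List.mem_map.1 hy'
        have := hymem x hx
        omega
  have hbnd : ∀ (t : ℕ) (ht : t < b.length), 1 ≤ b[t] ∧ b[t] ≤ t + 1 := by
    intro t ht
    obtain ⟨g1, g2, g3⟩ := hget t ht
    rcases lt_trichotomy t s with h | h | h
    · rw [g1 h]; exact hxb t (by omega)
    · rw [g2 h]; omega
    · rw [g3 h]
      have := hyb (t - s - 1) (by rw [hyl]; omega)
      have h2 := this.2
      omega
  refine ⟨⟨hlen, hsort, hbnd⟩, ?_, ?_⟩
  · intro ht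
    exact (hget s ht).2.1 rfl
  · intro t ht hst
    rw [(hget t ht).2.2 hst]
    have := (hyb (t - s - 1) (by rw [hyl]; omega)).2
    omega

lemma glue_decomp {q : ℕ} {b : List ℕ} (hb : b ∈ OPF (q+1)) :
    ∃ s ≤ q, ∃ xs ys, xs ∈ OPF s ∧ ys ∈ OPF (q - s) ∧ b = glue s (xs, ys) := by
  obtain ⟨hlen, hsort, hbnd⟩ := hb
  classical
  set P : ℕ → Prop := fun t => ∃ h : t < b.length, b[t] = t + 1 with hP
  have hP0 : P 0 := by
    refine ⟨by omega, ?_⟩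
    have := hbnd 0 (by omega)
    omega
  set s := Nat.findGreatest P q with hs
  have hsq : s ≤ q := Nat.findGreatest_le q
  have hPs : P s := Nat.findGreatest_spec (Nat.zero_le q) hP0
  obtain ⟨hslen, hsval⟩ := hPs
  have hgt : ∀ (t : ℕ) (h1 : s < t) (h2 : t < b.length), b[t] ≤ t := by
    intro t h1 h2
    have hnt : ¬ P t := Nat.findGreatest_is_greatest h1 (by omega)
    have := (hbnd t h2).2
    rcases Nat.lt_or_ge (b[t]'h2) (t+1) with h | h
    · omega
    · exact absurd ⟨h2, by omega⟩ hnt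
  have hge : ∀ t, s ≤ t → ∀ h : t < b.length, s + 1 ≤ b[t] := by
    intro t h1 h2
    calc s + 1 = b[s] := hsval.symm
    _ ≤ b[t] := sorted_getElem_le hsort h1 h2
  refine ⟨s, hsq, b.take s, (b.drop (s+1)).map (· - s), ?_, ?_, ?_⟩
  · refine ⟨by simp [hlen]; omega, hsort.sublist (List.take_sublist s b), ?_⟩
    intro t ht
    rw [List.getElem_take]
    have ht' : t < s := by simp [hlen] at ht; omega
    exact hbnd t (by omega)
  · refine ⟨by simp only [List.length_map, List.length_drop, hlen]; omega, ?_, ?_⟩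
    · exact List.pairwise_map.mpr
        ((hsort.sublist (List.drop_sublist (s+1) b)).imp (fun h => by omega))
    · intro t ht
      simp only [List.getElem_map, List.getElem_drop]
      have htl : s + 1 + t < b.length := by
        simp only [List.length_map, List.length_drop] at ht
        omega
      have h1 := hge (s+1+t) (by omega) htl
      have h2 := hgt (s+1+t) (by omega) htl
      omega
  · have hdropmem : ∀ x ∈ b.drop (s+1), s ≤ x := by
      intro x hx
      obtain ⟨t, ht, rfl⟩ := List.mem_iff_getElem.1 hx
      rw [List.getElem_drop]
      have htl : s + 1 + t < b.length := by
        simp only [List.length_drop] at ht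
        omega
      have := hge (s+1+t) (by omega) htl
      omega
    have hmap : ((b.drop (s+1)).map (· - s)).map (· + s) = b.drop (s+1) := by
      rw [List.map_map]
      conv_rhs => rw [← List.map_id (b.drop (s+1))]
      apply List.map_congr_left
      intro x hx
      have := hdropmem x hx
      simp only [Function.comp_apply, id_eq]
      omega
    have hdrop : b.drop s = (s+1) :: b.drop (s+1) := by
      rw [List.drop_eq_getElem_cons hslen, hsval]
    simp only [glue]
    rw [hmap, ← hdrop, List.take_append_drop]

def Gset (q s : ℕ) : Set (List ℕ) := glue s '' ((OPF s) ×ˢ (OPF (q - s)))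

lemma Gset_finite (q s : ℕ) : (Gset q s).Finite :=
  ((OPF_finite s).prod (OPF_finite (q - s))).image _

lemma glue_injOn (s q : ℕ) : Set.InjOn (glue s) ((OPF s) ×ˢ (OPF (q - s))) := by
  rintro ⟨xs, ys⟩ ⟨hxs, hys⟩ ⟨xs', ys'⟩ ⟨hxs', hys'⟩ heq
  simp only [glue] at heq
  obtain ⟨h1, h2⟩ := List.append_inj heq (hxs.1.trans hxs'.1.symm)
  simp only [List.cons.injEq, true_and] at h2
  have hinj : Function.Injective (fun x : ℕ => x + s) := fun a b h => by simpa using h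
  have h3 := List.map_injective_iff.2 hinj h2
  simp [Prod.ext_iff, h1, h3]

lemma Gset_mem_getElem {q s : ℕ} (hs : s ≤ q) {b : List ℕ} (hb : b ∈ Gset q s) :
    b ∈ OPF (q+1) ∧ (∀ ht : s < b.length, b[s] = s + 1) ∧
      (∀ (t : ℕ) (ht : t < b.length), s < t → b[t] ≤ t) := by
  obtain ⟨⟨xs, ys⟩, ⟨hxs, hys⟩, rfl⟩ := hb
  exact glue_mem hs hxs hys

lemma Gset_disjoint {q s s' : ℕ} (hs : s ≤ q) (hs' : s' ≤ q) (hne : s ≠ s') :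
    Disjoint (Gset q s) (Gset q s') := by
  rw [Set.disjoint_left]
  intro b hb hb'
  obtain ⟨⟨hlen, _, _⟩, hval, hle⟩ := Gset_mem_getElem hs hb
  obtain ⟨_, hval', hle'⟩ := Gset_mem_getElem hs' hb'
  rcases Nat.lt_or_ge s s' with h | h
  · have e1 := hval' (by omega)
    have e2 := hle s' (by omega) h
    omega
  · have h' : s' < s := by omega
    have e1 := hval (by omega)
    have e2 := hle' s (by omega) h'
    omega

lemma OPF_cover (q : ℕ) : OPF (q+1) = ⋃ s ∈ Finset.range (q+1), Gset q s := by
  ext b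
  constructor
  · intro hb
    obtain ⟨s, hsq, xs, ys, hxs, hys, rfl⟩ := glue_decomp hb
    exact Set.mem_biUnion (show s ∈ Finset.range (q+1) by simp; omega) ⟨(xs, ys), ⟨hxs, hys⟩, rfl⟩
  · intro hb
    obtain ⟨s, hsmem, hbs⟩ := Set.mem_iUnion₂.1 hb
    have hs : s ≤ q := by simp at hsmem; omega
    exact (Gset_mem_getElem hs hbs).1

theorem ncard_OPF : ∀ i : ℕ, (OPF i).ncard = catalan i := by
  intro i
  induction i using Nat.strong_induction_on with
  | _ i ih =>
    match i with
    | 0 =>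
      have : OPF 0 = {([] : List ℕ)} := by
        ext b
        simp only [OPF, Set.mem_setOf_eq, Set.mem_singleton_iff, List.length_eq_zero_iff]
        constructor
        · rintro ⟨h, _⟩; exact h
        · rintro rfl; simp
      rw [this, Set.ncard_singleton, catalan_zero]
    | q+1 =>
      rw [OPF_cover q, ncard_biUnion _ _ (fun s _ => Gset_finite q s)
        (fun s hs s' hs' hne => Gset_disjoint (by simp at hs; omega) (by simp at hs'; omega) hne)]
      rw [catalan_succ q, Fin.sum_univ_eq_sum_range (fun s => catalan s * catalan (q - s)) (q+1)]
      apply Finset.sum_congr rfl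
      intro s hs
      have hsq : s ≤ q := by simp at hs; omega
      rw [Gset, Set.ncard_image_of_injOn (glue_injOn s q), ncard_prod',
        ih s (by omega), ih (q - s) (by omega)]
/-! ### The main decomposition -/

lemma head?_eq_getElem0 {c : List ℕ} (h : 0 < c.length) :
    c.head? = some (c.get ⟨0, h⟩) := by
  cases c with
  | nil => simp at h
  | cons a l => rfl

lemma sorted_head_le_s17 {c : List ℕ} {h0 : ℕ} (hs : c.Pairwise (· ≤ ·))
    (hh : c.head? = some h0) : ∀ x ∈ c, h0 ≤ x := by
  cases c with
  | nil => simp at hh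
  | cons a l =>
    simp only [List.head?_cons, Option.some.injEq] at hh
    subst hh
    intro x hx
    rcases List.mem_cons.1 hx with rfl | hx'
    · exact le_rfl
    · exact (List.pairwise_cons.1 hs).1 x hx'

def Pset (m i : ℕ) : Set (List ℕ) :=
  {b | b.length = i ∧ b.Pairwise (· ≤ ·) ∧ ∀ (t : ℕ) (ht : t < b.length), m ≤ b[t] ∧ b[t] ≤ m + t}

lemma Pset_finite (m i : ℕ) : (Pset m i).Finite := by
  apply (finite_pref i (m + i)).subset
  rintro b ⟨h1, h2, h3⟩
  refine ⟨h1, fun x hx => ?_⟩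
  obtain ⟨t, ht, rfl⟩ := List.mem_iff_getElem.1 hx
  have := (h3 t ht).2
  have := h1 ▸ ht
  omega

lemma Pset_ncard {m : ℕ} (hm : 1 ≤ m) (i : ℕ) : (Pset m i).ncard = catalan i := by
  have himg : Pset m i = (List.map (· + (m - 1))) '' OPF i := by
    ext a
    constructor
    · rintro ⟨h1, h2, h3⟩
      refine ⟨a.map (· - (m-1)), ⟨by simp [h1], ?_, ?_⟩, ?_⟩
      · exact List.pairwise_map.mpr (h2.imp (fun h => by omega))
      · intro t ht
        simp only [List.length_map] at ht
        simp only [List.getElem_map]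
        have := h3 t ht
        omega
      · rw [List.map_map]
        conv_rhs => rw [← List.map_id a]
        apply List.map_congr_left
        intro x hx
        obtain ⟨t, ht, rfl⟩ := List.mem_iff_getElem.1 hx
        have := (h3 t ht).1
        simp only [Function.comp_apply, id_eq]
        omega
    · rintro ⟨b, ⟨h1, h2, h3⟩, rfl⟩
      refine ⟨by simp [h1], ?_, ?_⟩
      · exact List.pairwise_map.mpr (h2.imp (fun h => by omega))
      · intro t ht
        simp only [List.length_map] at ht
        simp only [List.getElem_map]
        have := h3 t ht
        omega
  rw [himg, Set.ncard_image_of_injOn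
    (Set.injOn_of_injective (List.map_injective_iff.2 (fun a b h => by simpa using h))),
    ncard_OPF]

/-- The suffix sets: exactly the sets whose cardinality is `opMaxLead (n-i) k (l-i) j`. -/
def Qset (n k l i j : ℕ) : Set (List ℕ) :=
  {a : List ℕ | IsOrderedPrefSet (n-i) a ∧ flaws (n-i) a = k ∧ (∀ x ∈ a, x ≤ l-i) ∧
    (l-i) ∈ a ∧ a.head? = some j}

lemma Qset_ncard (n k l i j : ℕ) : (Qset n k l i j).ncard = opMaxLead (n-i) k (l-i) j := rfl

lemma Qset_finite (n k l i j : ℕ) : (Qset n k l i j).Finite := by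
  apply (finite_pref (n-i) (n-i)).subset
  rintro a ⟨⟨⟨h1, h2⟩, _⟩, _⟩
  exact ⟨h1, fun x hx => (h2 x hx).2⟩

def Emap (i : ℕ) (bc : List ℕ × List ℕ) : List ℕ := bc.1 ++ bc.2.map (· + i)

def Fset (n k l m j i : ℕ) : Set (List ℕ) := Emap i '' ((Pset m i) ×ˢ (Qset n k l i j))

lemma Fset_finite (n k l m j i : ℕ) : (Fset n k l m j i).Finite :=
  ((Pset_finite m i).prod (Qset_finite n k l i j)).image _

lemma Emap_injOn (n k l m j i : ℕ) : Set.InjOn (Emap i) ((Pset m i) ×ˢ (Qset n k l i j)) := by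
  rintro ⟨xs, ys⟩ ⟨hxs, hys⟩ ⟨xs', ys'⟩ ⟨hxs', hys'⟩ heq
  simp only [Emap] at heq
  obtain ⟨h1, h2⟩ := List.append_inj heq (hxs.1.trans hxs'.1.symm)
  have h3 := List.map_injective_iff.2 (fun a b h => by simpa using h : Function.Injective (· + i)) h2
  simp [Prod.ext_iff, h1, h3]

lemma Fset_ncard {m : ℕ} (hm : 1 ≤ m) (n k l j i : ℕ) :
    (Fset n k l m j i).ncard = catalan i * opMaxLead (n-i) k (l-i) j := by
  rw [Fset, Set.ncard_image_of_injOn (Emap_injOn n k l m j i), ncard_prod', Pset_ncard hm,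
    Qset_ncard]
def Sset (n k l m : ℕ) : Set (List ℕ) :=
  {a : List ℕ | IsOrderedPrefSet n a ∧ flaws n a = k ∧ (∀ x ∈ a, x ≤ l) ∧ l ∈ a ∧
    a.head? = some m}

lemma Emap_mem {n k l m j i : ℕ} (hm : 1 ≤ m) (hmk : m ≤ k) (hl : k + 1 ≤ l) (hn : l ≤ n)
    (hj1 : m + 1 ≤ j) (hi1 : 1 ≤ i) (hi2 : i ≤ n - k)
    {xs ys : List ℕ} (hxs : xs ∈ Pset m i) (hys : ys ∈ Qset n k l i j) :
    Emap i (xs, ys) ∈ Sset n k l m ∧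
    (∀ (t : ℕ) (ht : t < (Emap i (xs, ys)).length), t < i → (Emap i (xs, ys))[t] ≤ m + t) ∧
    (∀ ht : i < (Emap i (xs, ys)).length, (Emap i (xs, ys))[i] = j + i) := by
  obtain ⟨hxl, hxsort, hxb⟩ := hxs
  obtain ⟨⟨⟨hyl, hybnd⟩, hysort⟩, hyfl, hyle, hylmem, hyhead⟩ := hys
  have hkn : k ≤ n := by omega
  have hysne : 0 < ys.length := by
    cases ys with
    | nil => simp at hyhead
    | cons _ _ => simp
  have hjge : ∀ x ∈ ys, j ≤ x := sorted_head_le_s17 hysort hyhead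
  have hjmem : j ∈ ys := by
    cases ys with
    | nil => simp at hyhead
    | cons b bs =>
      simp only [List.head?_cons, Option.some.injEq] at hyhead
      simp [hyhead.symm]
  have hjn : j ≤ n - i := (hybnd j hjmem).2
  have hjl : j ≤ l - i := hyle j hjmem
  have hli : m + i + 1 ≤ l := by
    have := hjge (l - i) hylmem
    omega
  have hin : i ≤ n := by omega
  have hxmem : ∀ x ∈ xs, m ≤ x ∧ x ≤ m + i - 1 := by
    intro x hx
    obtain ⟨t, ht, rfl⟩ := List.mem_iff_getElem.1 hx
    have h1 := hxb t ht
    have h2 : t < i := hxl ▸ ht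
    omega
  have hymapmem : ∀ x ∈ ys.map (· + i), m + i + 1 ≤ x ∧ x ≤ l := by
    intro x hx
    obtain ⟨y, hy, rfl⟩ := List.mem_map.1 hx
    have h1 := hjge y hy
    have h2 := hyle y hy
    omega
  set a := Emap i (xs, ys) with ha
  have halen : a.length = n := by
    simp only [ha, Emap, List.length_append, List.length_map, hxl, hyl]
    omega
  have hget : ∀ (t : ℕ) (ht : t < a.length),
      (∀ hti : t < i, a[t] = xs[t]'(by rw [hxl]; exact hti)) ∧
      (∀ hit : i ≤ t, a[t] = ys[t - i]'(by rw [hyl]; rw [halen] at ht; omega) + i) := by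
    intro t ht
    constructor
    · intro hti
      simp only [ha, Emap]
      rw [List.getElem_append_left (by rw [hxl]; exact hti)]
    · intro hit
      simp only [ha, Emap]
      rw [List.getElem_append_right (by rw [hxl]; exact hit)]
      simp only [List.getElem_map, hxl]
  have hsorted : a.Pairwise (· ≤ ·) := by
    simp only [ha, Emap]
    refine List.pairwise_append.mpr ⟨hxsort, ?_, ?_⟩
    · exact List.pairwise_map.mpr (hysort.imp (fun h => by omega))
    · intro x hx y hy
      have := (hxmem x hx).2
      have := (hymapmem y hy).1
      omega
  have hflaws : flaws n a = k := by
    have hempty : Finset.Icc m (m - 1) = ∅ := Finset.Icc_eq_empty (by omega)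
    obtain ⟨hf0, hfin⟩ := fills n m hm xs m le_rfl (by rw [hxl]; omega)
      (fun t ht => hxb t ht)
    have hIcc : Finset.Icc m (m - 1 + xs.length) = Finset.Icc m (m + i - 1) := by
      rw [hxl]; congr 1; omega
    have hshift := flawsFrom_shift (n := n) (m := m) (i := i) hm hin (ys.map (· + i)) ∅
      (fun p hp => (hymapmem p hp).1.trans' (by omega))
    simp only [Finset.image_empty, Finset.union_empty] at hshift
    have hcancel : (ys.map (· + i)).map (· - i) = ys := by
      rw [List.map_map]
      conv_rhs => rw [← List.map_id ys]
      apply List.map_congr_left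
      intro x hx
      simp only [Function.comp_apply, id_eq]
      omega
    rw [hcancel] at hshift
    rw [flaws, ha, Emap, flawsFrom_append, ← hempty, hf0, hfin, hIcc, hshift]
    rw [flaws] at hyfl
    omega
  refine ⟨⟨⟨⟨halen, ?_⟩, hsorted⟩, hflaws, ?_, ?_, ?_⟩, ?_, ?_⟩
  · -- entries in [1, n]
    intro x hx
    simp only [ha, Emap, List.mem_append] at hx
    rcases hx with hx | hx
    · have := hxmem x hx
      omega
    · have := hymapmem x hx
      omega
  · -- entries ≤ l
    intro x hx
    simp only [ha, Emap, List.mem_append] at hx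
    rcases hx with hx | hx
    · have := hxmem x hx
      omega
    · exact (hymapmem x hx).2
  · -- l ∈ a
    simp only [ha, Emap, List.mem_append]
    right
    rw [List.mem_map]
    exact ⟨l - i, hylmem, by omega⟩
  · -- head
    have h0 : 0 < a.length := by omega
    rw [head?_eq_getElem0 h0]
    have h00 : a.get ⟨0, h0⟩ = a[0]'h0 := rfl
    have := (hget 0 h0).1 (by omega)
    have hx0 := hxb 0 (by rw [hxl]; omega)
    rw [h00, this]
    have : xs[0]'(by rw [hxl]; omega) = m := by omega
    rw [this]
  · -- prefix bound
    intro t ht hti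
    rw [(hget t ht).1 hti]
    exact (hxb t (by rw [hxl]; exact hti)).2
  · -- value at i
    intro ht
    rw [(hget i ht).2 le_rfl]
    have h0y : 0 < ys.length := hysne
    have : ys[i - i]'(by omega) = j := by
      have := head?_eq_getElem0 h0y
      rw [hyhead] at this
      have h2 : ys.get ⟨0, h0y⟩ = j := by
        injection this.symm
      simp only [Nat.sub_self]
      exact h2
    rw [this]
lemma flaws_head_lt {N : ℕ} {c : List ℕ} {h0 : ℕ} (hh : c.head? = some h0) (hN : h0 ≤ N) :
    flawsFrom N c ∅ + 1 ≤ c.length := by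
  cases c with
  | nil => simp at hh
  | cons p rest =>
    simp only [List.head?_cons, Option.some.injEq] at hh
    subst hh
    have hff : firstFree N (∅ : Finset ℕ) p = some p :=
      firstFree_eq_some le_rfl hN (by simp) (fun r h1 h2 => by omega)
    rw [flawsFrom_cons_some _ hff]
    have := flawsFrom_le_length N rest (insert p ∅)
    simp only [List.length_cons]
    omega

lemma Sset_decomp {n k l m : ℕ} (hm : 1 ≤ m) (hmk : m ≤ k) (hl : k + 1 ≤ l) (hn : l ≤ n)
    {a : List ℕ} (hA : a ∈ Sset n k l m) :
    ∃ j i, (m + 1 ≤ j ∧ j ≤ k + 1) ∧ (1 ≤ i ∧ i ≤ n - k) ∧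
      a.take i ∈ Pset m i ∧ (a.drop i).map (· - i) ∈ Qset n k l i j ∧
      a = Emap i (a.take i, (a.drop i).map (· - i)) := by
  classical
  obtain ⟨⟨⟨halen, habnd⟩, hasort⟩, hafl, hale, halmem, hahead⟩ := hA
  have hkn : k ≤ n := by omega
  have hmge : ∀ x ∈ a, m ≤ x := sorted_head_le_s17 hasort hahead
  have ha0 : 0 < a.length := by omega
  have ha0v : a[0]'ha0 = m := by
    have h := head?_eq_getElem0 ha0
    rw [hahead] at h
    injection h.symm
  have hempty : Finset.Icc m (m - 1) = ∅ := Finset.Icc_eq_empty (by omega)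
  set P : ℕ → Prop := fun t => ∃ h : t < a.length, m + t + 1 ≤ a[t] with hP
  have hPex : ∃ t, P t := by
    by_contra hno
    push_neg at hno
    have hno' : ∀ (t : ℕ) (h : t < a.length), a[t] ≤ m + t := by
      intro t h
      have h2 := hno t
      rw [hP] at h2
      simp only [not_exists] at h2
      have h3 := h2 h
      omega
    set i0 := n + 1 - m with hi0
    have hi0n : i0 ≤ n := by omega
    obtain ⟨hf0, hfin⟩ := fills n m hm (a.take i0) m le_rfl
      (by simp [halen]; omega)
      (by
        intro t ht
        rw [List.getElem_take]
        have ht' : t < i0 := by simp [halen] at ht; omega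
        exact ⟨hmge _ (List.getElem_mem _), hno' t (by omega)⟩)
    rw [hempty] at hf0 hfin
    have htlen : (a.take i0).length = i0 := by simp [halen]; omega
    have hIcc : finalOcc n (a.take i0) ∅ = Finset.Icc m n := by
      rw [hfin, htlen]; congr 1; omega
    have hdropfail : flawsFrom n (a.drop i0) (Finset.Icc m n) = (a.drop i0).length := by
      apply flawsFrom_all_fail_s17
      intro p hp r h1 h2
      have hpm : m ≤ p := hmge p (List.mem_of_mem_drop hp)
      simp only [Finset.mem_Icc]
      omega
    have hfl : flaws n a = m - 1 := by
      rw [flaws]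
      conv_lhs => rw [← List.take_append_drop i0 a]
      rw [flawsFrom_append, hf0, hIcc, hdropfail]
      simp [halen]
      omega
    omega
  have hkey : ∃ i, (∃ h : i < a.length, m + i + 1 ≤ a[i]) ∧
      ∀ (t : ℕ) (h : t < a.length), t < i → a[t] ≤ m + t := by
    refine ⟨Nat.find hPex, Nat.find_spec hPex, ?_⟩
    intro t h hti
    have hnt := Nat.find_min hPex hti
    rw [hP] at hnt
    simp only [not_exists] at hnt
    have := hnt h
    omega
  obtain ⟨i, ⟨hilen, hival⟩, hile⟩ := hkey
  have hi1 : 1 ≤ i := by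
    by_contra h0
    have hi0 : i = 0 := by omega
    subst hi0
    omega
  have haimem : a[i]'hilen ∈ a := List.getElem_mem _
  have hain : a[i]'hilen ≤ n := (habnd _ haimem).2
  have him : m + i + 1 ≤ n := by omega
  have hdropge : ∀ x ∈ a.drop i, m + i + 1 ≤ x := by
    intro x hx
    obtain ⟨t, ht, rfl⟩ := List.mem_iff_getElem.1 hx
    rw [List.getElem_drop]
    have htl : i + t < a.length := by simp at ht; omega
    have := sorted_getElem_le hasort (Nat.le_add_right i t) htl
    omega
  have hPmem : a.take i ∈ Pset m i := by
    refine ⟨by simp [halen]; omega, hasort.sublist (List.take_sublist i a), ?_⟩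
    intro t ht
    rw [List.getElem_take]
    have ht' : t < i := by simp at ht; omega
    exact ⟨hmge _ (List.getElem_mem _), hile t (by omega) ht'⟩
  obtain ⟨hf0, hfin⟩ := fills n m hm (a.take i) m le_rfl
    (by simp [halen]; omega)
    (by
      intro t ht
      rw [List.getElem_take]
      have ht' : t < i := by simp at ht; omega
      exact ⟨hmge _ (List.getElem_mem _), hile t (by omega) ht'⟩)
  rw [hempty] at hf0 hfin
  have htlen : (a.take i).length = i := by simp [halen]; omega
  have hIcc : finalOcc n (a.take i) ∅ = Finset.Icc m (m + i - 1) := by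
    rw [hfin, htlen]; congr 1; omega
  have hshift := flawsFrom_shift (n := n) (m := m) (i := i) hm (by omega) (a.drop i) ∅
    (fun p hp => by have := hdropge p hp; omega)
  simp only [Finset.image_empty, Finset.union_empty] at hshift
  have hflays : flaws (n - i) ((a.drop i).map (· - i)) = k := by
    rw [← hafl, flaws, flaws]
    conv_rhs => rw [← List.take_append_drop i a]
    rw [flawsFrom_append, hf0, hIcc, hshift]
    omega
  set ys := (a.drop i).map (· - i) with hys
  have hyslen : ys.length = n - i := by simp [hys, halen]
  have hysget0 : ys.head? = some (a[i]'hilen - i) := by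
    have h0 : 0 < ys.length := by omega
    rw [head?_eq_getElem0 h0]
    congr 1
    have he : ys.get ⟨0, h0⟩ = ys[0]'h0 := rfl
    rw [he]
    simp only [hys, List.getElem_map, List.getElem_drop]
    simp
  set j := a[i]'hilen - i with hj
  have hj1 : m + 1 ≤ j := by omega
  have hjn : j ≤ n - i := by omega
  have hysge : ∀ x ∈ ys, j ≤ x := sorted_head_le_s17
    (List.pairwise_map.mpr ((hasort.sublist (List.drop_sublist i a)).imp (fun h => by omega)))
    hysget0
  have hj2 : j ≤ k + 1 := by
    have hbd := flawsFrom_parked_bound (n - i) j ys ∅ hysge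
    rw [flaws] at hflays
    rw [hflays] at hbd
    simp only [Finset.sdiff_empty, Nat.card_Icc] at hbd
    omega
  have hi2 : i ≤ n - k := by
    have hlt := flaws_head_lt (N := n - i) hysget0 (by omega)
    rw [flaws] at hflays
    omega
  have hli : m + i + 1 ≤ l := by
    have := hale _ haimem
    omega
  refine ⟨j, i, ⟨hj1, hj2⟩, ⟨hi1, hi2⟩, hPmem, ⟨⟨⟨hyslen, ?_⟩, ?_⟩, hflays, ?_, ?_, hysget0⟩, ?_⟩
  · intro x hx
    obtain ⟨y, hy, rfl⟩ := List.mem_map.1 hx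
    have h1 := hdropge y hy
    have h2 := (habnd y (List.mem_of_mem_drop hy)).2
    omega
  · exact List.pairwise_map.mpr ((hasort.sublist (List.drop_sublist i a)).imp (fun h => by omega))
  · intro x hx
    obtain ⟨y, hy, rfl⟩ := List.mem_map.1 hx
    have := hale y (List.mem_of_mem_drop hy)
    omega
  · have hldrop : l ∈ a.drop i := by
      have hmem := halmem
      conv at hmem => rw [← List.take_append_drop i a]
      rcases List.mem_append.1 hmem with h | h
      · exfalso
        obtain ⟨t, ht, hteq⟩ := List.mem_iff_getElem.1 h
        rw [List.getElem_take] at hteq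
        have ht' : t < i := by simp at ht; omega
        have := hile t (by omega) ht'
        omega
      · exact h
    exact List.mem_map.2 ⟨l, hldrop, rfl⟩
  · simp only [Emap]
    have hcancel : ((a.drop i).map (· - i)).map (· + i) = a.drop i := by
      rw [List.map_map]
      conv_rhs => rw [← List.map_id (a.drop i)]
      apply List.map_congr_left
      intro x hx
      have := hdropge x hx
      simp only [Function.comp_apply, id_eq]
      omega
    rw [hcancel, List.take_append_drop]
lemma Fset_spec {n k l m j i : ℕ} (hm : 1 ≤ m) (hmk : m ≤ k) (hl : k + 1 ≤ l) (hn : l ≤ n)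
    (hj1 : m + 1 ≤ j) (hi1 : 1 ≤ i) (hi2 : i ≤ n - k) {a : List ℕ}
    (ha : a ∈ Fset n k l m j i) :
    a ∈ Sset n k l m ∧ (∀ (t : ℕ) (ht : t < a.length), t < i → a[t] ≤ m + t) ∧
      ∀ (ht : i < a.length), a[i] = j + i := by
  obtain ⟨⟨xs, ys⟩, ⟨hxs, hys⟩, rfl⟩ := ha
  exact Emap_mem hm hmk hl hn hj1 hi1 hi2 hxs hys

theorem stmt17' (n k l m : ℕ) (hm : 1 ≤ m) (hmk : m ≤ k) (hl : k + 1 ≤ l) (hn : l ≤ n) :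
    opMaxLead n k l m
      = ∑ j ∈ Finset.Icc (m + 1) (k + 1), ∑ i ∈ Finset.Icc 1 (n - k),
          catalan i * opMaxLead (n - i) k (l - i) j := by
  classical
  set T : Finset (ℕ × ℕ) := Finset.Icc (m + 1) (k + 1) ×ˢ Finset.Icc 1 (n - k) with hT
  have hmemT : ∀ x : ℕ × ℕ, x ∈ T ↔
      ((m + 1 ≤ x.1 ∧ x.1 ≤ k + 1) ∧ (1 ≤ x.2 ∧ x.2 ≤ n - k)) := by
    intro x
    simp [hT, Finset.mem_product, Finset.mem_Icc]
  have hcover : Sset n k l m = ⋃ x ∈ T, Fset n k l m x.1 x.2 := by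
    ext a
    constructor
    · intro hA
      obtain ⟨j, i, ⟨hj1, hj2⟩, ⟨hi1, hi2⟩, hPm, hQm, heq⟩ := Sset_decomp hm hmk hl hn hA
      exact Set.mem_biUnion (show (j, i) ∈ T from (hmemT (j, i)).2 ⟨⟨hj1, hj2⟩, ⟨hi1, hi2⟩⟩)
        ⟨(a.take i, (a.drop i).map (· - i)), ⟨hPm, hQm⟩, heq.symm⟩
    · intro hA
      obtain ⟨x, hxT, hax⟩ := Set.mem_iUnion₂.1 hA
      obtain ⟨⟨hj1, _⟩, ⟨hi1, hi2⟩⟩ := (hmemT x).1 hxT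
      exact (Fset_spec hm hmk hl hn hj1 hi1 hi2 hax).1
  have hdisj : ∀ x ∈ T, ∀ x' ∈ T, x ≠ x' →
      Disjoint (Fset n k l m x.1 x.2) (Fset n k l m x'.1 x'.2) := by
    intro x hx x' hx' hne
    obtain ⟨⟨hj1, _⟩, ⟨hi1, hi2⟩⟩ := (hmemT x).1 hx
    obtain ⟨⟨hj1', _⟩, ⟨hi1', hi2'⟩⟩ := (hmemT x').1 hx'
    rw [Set.disjoint_left]
    intro a ha ha'
    obtain ⟨hS, hpre, hval⟩ := Fset_spec hm hmk hl hn hj1 hi1 hi2 ha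
    obtain ⟨_, hpre', hval'⟩ := Fset_spec hm hmk hl hn hj1' hi1' hi2' ha'
    have hlen : a.length = n := hS.1.1.1
    have hx2n : x.2 < a.length := by rw [hlen]; omega
    have hx2n' : x'.2 < a.length := by rw [hlen]; omega
    rcases lt_trichotomy x.2 x'.2 with h | h | h
    · have e1 := hval hx2n
      have e2 := hpre' x.2 hx2n h
      omega
    · have e1 := hval hx2n
      have e2 := hval' hx2n'
      simp only [← h] at e2
      have : x.1 = x'.1 := by omega
      exact hne (Prod.ext this h)
    · have e1 := hval' hx2n'
      have e2 := hpre x'.2 hx2n' h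
      omega
  have hmain : opMaxLead n k l m = (Sset n k l m).ncard := rfl
  rw [hmain, hcover, ncard_biUnion T _ (fun x _ => Fset_finite n k l m x.1 x.2) hdisj, hT,
    Finset.sum_product]
  apply Finset.sum_congr rfl
  intro j hj
  apply Finset.sum_congr rfl
  intro i hi
  exact Fset_ncard hm n k l j i

theorem stmt17 (n k l m : ℕ) (hm : 1 ≤ m) (hmk : m ≤ k) (hl : k + 1 ≤ l) (hn : l ≤ n) :
    opMaxLead n k l m
      = ∑ j ∈ Finset.Icc (m + 1) (k + 1), ∑ i ∈ Finset.Icc 1 (n - k),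
          catalan i * opMaxLead (n - i) k (l - i) j := by
  exact stmt17' n k l m hm hmk hl hn
end
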